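/- arXiv:2407.11958 — 2 statements merged into one kernel-verified Lean document; each statement's English description precedes it below -/
import Mathlib

section
/- Let 𝒞 be a category with finite limits (the paper's case is the category of affine schemes over a base ring, i.e. the opposite of the category of commutative algebras). For a presheaf F : 𝒞ᵒᵖ ⥤ Type, an object A of 𝒞 and a morphism x : y(A) ⟶ F (where y is the Yoneda embedding), the stabilizer of the point x is the pullback Stab_F(x) := y(A) ×_F y(A) of x along itself, computed in the category of presheaves; say that F has representable stabilizers if Stab_F(x) is a representable presheaf for every object A and every point x : y(A) ⟶ F. Then for any cospan of presheaves Y ⟶ W ⟵ Z such that both Y and Z have representable stabilizers, the fibre product presheaf Y ×_W Z also has representable stabilizers. -/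
open CategoryTheory Limits

universe u

/-- The stabilizer of a point `x : y(A) ⟶ F` of a presheaf `F` is the self-pullback
`y(A) ×_F y(A)` of `x` along itself, computed in the category of presheaves.
`F` has representable stabilizers if all of these pullbacks are representable presheaves. -/
def HasRepresentableStabilizers {C : Type u} [SmallCategory C]
    (F : Cᵒᵖ ⥤ Type u) : Prop :=
  ∀ (A : C) (x : yoneda.obj A ⟶ F), (pullback x x).IsRepresentable

/-- A fibre product of presheaves with representable stabilizers has representable
stabilizers. -/
theorem fibreProduct_hasRepresentableStabilizers
    {C : Type u} [SmallCategory C] [HasFiniteLimits C]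
    {Y W Z : Cᵒᵖ ⥤ Type u} (f : Y ⟶ W) (g : Z ⟶ W)
    (hY : HasRepresentableStabilizers Y) (hZ : HasRepresentableStabilizers Z) :
    HasRepresentableStabilizers (pullback f g) := by
  intro A x
  set x₁ : yoneda.obj A ⟶ Y := x ≫ pullback.fst f g with hx₁
  set x₂ : yoneda.obj A ⟶ Z := x ≫ pullback.snd f g with hx₂
  haveI h₁ := hY A x₁
  haveI h₂ := hZ A x₂
  -- the two stabilizers map to `y(A) ⨯ y(A)`
  set u₁ : pullback x₁ x₁ ⟶ yoneda.obj A ⨯ yoneda.obj A :=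
    prod.lift (pullback.fst x₁ x₁) (pullback.snd x₁ x₁) with hu₁
  set u₂ : pullback x₂ x₂ ⟶ yoneda.obj A ⨯ yoneda.obj A :=
    prod.lift (pullback.fst x₂ x₂) (pullback.snd x₂ x₂) with hu₂
  -- the stabilizer of `x` maps to both stabilizers
  have c₁ : pullback.fst x x ≫ x₁ = pullback.snd x x ≫ x₁ := by
    rw [hx₁, ← Category.assoc, ← Category.assoc, pullback.condition]
  have c₂ : pullback.fst x x ≫ x₂ = pullback.snd x x ≫ x₂ := by
    rw [hx₂, ← Category.assoc, ← Category.assoc, pullback.condition]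
  set k₁ : pullback x x ⟶ pullback x₁ x₁ :=
    pullback.lift (pullback.fst x x) (pullback.snd x x) c₁ with hk₁
  set k₂ : pullback x x ⟶ pullback x₂ x₂ :=
    pullback.lift (pullback.fst x x) (pullback.snd x x) c₂ with hk₂
  have w : k₁ ≫ u₁ = k₂ ≫ u₂ := by
    apply Limits.prod.hom_ext <;> simp [hk₁, hk₂, hu₁, hu₂, pullback.lift_fst, pullback.lift_snd, prod.lift_fst, prod.lift_snd]
  -- for any cone over the cospan `u₁, u₂`, the two legs agree on projections
  have key₁ : ∀ s : PullbackCone u₁ u₂,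
      s.fst ≫ pullback.fst x₁ x₁ = s.snd ≫ pullback.fst x₂ x₂ := fun s => by
    have := s.condition =≫ prod.fst
    simpa [hu₁, hu₂, pullback.lift_fst, pullback.lift_snd, prod.lift_fst, prod.lift_snd] using this
  have key₂ : ∀ s : PullbackCone u₁ u₂,
      s.fst ≫ pullback.snd x₁ x₁ = s.snd ≫ pullback.snd x₂ x₂ := fun s => by
    have := s.condition =≫ prod.snd
    simpa [hu₁, hu₂, pullback.lift_fst, pullback.lift_snd, prod.lift_fst, prod.lift_snd] using this
  have keyw : ∀ s : PullbackCone u₁ u₂,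
      (s.fst ≫ pullback.fst x₁ x₁) ≫ x = (s.fst ≫ pullback.snd x₁ x₁) ≫ x := fun s => by
    apply pullback.hom_ext
    · simp only [Category.assoc, ← hx₁]
      rw [pullback.condition]
    · simp only [Category.assoc, ← hx₂]
      rw [← Category.assoc s.fst, ← Category.assoc s.fst, key₁ s, key₂ s,
        Category.assoc, Category.assoc, pullback.condition]
  -- `pullback x x` is the pullback of the two stabilizers over `y(A) ⨯ y(A)`
  have lim : IsLimit (PullbackCone.mk k₁ k₂ w) := by
    refine PullbackCone.IsLimit.mk w
      (fun s => pullback.lift (s.fst ≫ pullback.fst x₁ x₁) (s.fst ≫ pullback.snd x₁ x₁) (keyw s))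
      (fun s => ?_) (fun s => ?_) (fun s m hm₁ hm₂ => ?_)
    · apply pullback.hom_ext <;> simp [hk₁, pullback.lift_fst, pullback.lift_snd, prod.lift_fst, prod.lift_snd]
    · apply pullback.hom_ext
      · have hA : k₂ ≫ pullback.fst x₂ x₂ = pullback.fst x x := by simp [hk₂, pullback.lift_fst, pullback.lift_snd, prod.lift_fst, prod.lift_snd]
        rw [Category.assoc, hA, pullback.lift_fst, key₁ s]
      · have hB : k₂ ≫ pullback.snd x₂ x₂ = pullback.snd x x := by simp [hk₂, pullback.lift_fst, pullback.lift_snd, prod.lift_fst, prod.lift_snd]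
        rw [Category.assoc, hB, pullback.lift_snd, key₂ s]
    · apply pullback.hom_ext
      · rw [pullback.lift_fst]
        have h : pullback.fst x x = k₁ ≫ pullback.fst x₁ x₁ := by simp [hk₁, pullback.lift_fst, pullback.lift_snd, prod.lift_fst, prod.lift_snd]
        rw [h, ← Category.assoc, hm₁]
      · rw [pullback.lift_snd]
        have h : pullback.snd x x = k₁ ≫ pullback.snd x₁ x₁ := by simp [hk₁, pullback.lift_fst, pullback.lift_snd, prod.lift_fst, prod.lift_snd]
        rw [h, ← Category.assoc, hm₁]
  -- hence `pullback x x ≅ pullback u₁ u₂`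
  let isoA : pullback u₁ u₂ ≅ pullback x x :=
    IsLimit.conePointUniqueUpToIso (pullbackIsPullback u₁ u₂) lim
  -- replace the cospan by a cospan of representables
  let e₁ : yoneda.obj (pullback x₁ x₁).reprX ≅ pullback x₁ x₁ := (pullback x₁ x₁).reprW
  let e₂ : yoneda.obj (pullback x₂ x₂).reprX ≅ pullback x₂ x₂ := (pullback x₂ x₂).reprW
  let pi : yoneda.obj (A ⨯ A) ≅ yoneda.obj A ⨯ yoneda.obj A := PreservesLimitPair.iso yoneda A A
  let m₁ : (pullback x₁ x₁).reprX ⟶ A ⨯ A := yoneda.preimage (e₁.hom ≫ u₁ ≫ pi.inv)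
  let m₂ : (pullback x₂ x₂).reprX ⟶ A ⨯ A := yoneda.preimage (e₂.hom ≫ u₂ ≫ pi.inv)
  have hm₁ : yoneda.map m₁ ≫ pi.hom = e₁.hom ≫ u₁ := by
    simp [m₁]
  have hm₂ : yoneda.map m₂ ≫ pi.hom = e₂.hom ≫ u₂ := by
    simp [m₂]
  let pm : pullback (yoneda.map m₁) (yoneda.map m₂) ⟶ pullback u₁ u₂ :=
    pullback.map _ _ _ _ e₁.hom e₂.hom pi.hom hm₁ hm₂
  haveI : IsIso pm := by dsimp only [pm]; infer_instance
  let isoB : pullback (yoneda.map m₁) (yoneda.map m₂) ≅ pullback u₁ u₂ := asIso pm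
  let isoC : yoneda.obj (pullback m₁ m₂) ≅ pullback (yoneda.map m₁) (yoneda.map m₂) :=
    PreservesPullback.iso yoneda m₁ m₂
  exact Functor.IsRepresentable.mk' (isoC ≪≫ isoB ≪≫ isoA)
end

section
/- Let 𝒞 be a category with finite limits. Let f : Y ⟶ W and g : Z ⟶ W be morphisms, let P := Y ×_W Z be their pullback with projections p₁ : P ⟶ Y and p₂ : P ⟶ Z, let x : A ⟶ P be a morphism, and write x_Y := x ≫ p₁ and x_Z := x ≫ p₂. Then there is an isomorphism A ×_P A ≅ (A ×_Y A) ×_{A × A} (A ×_Z A), where A ×_P A is the pullback of x along itself, A ×_Y A is the pullback of x_Y along itself, A ×_Z A is the pullback of x_Z along itself, the morphism A ×_Y A ⟶ A × A is the pairing of the two pullback projections (and likewise for A ×_Z A), and the fibre product on the right is taken over these two morphisms; moreover, the isomorphism is compatible with the canonical morphisms of both sides to A × A. -/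
open CategoryTheory Limits

universe v u

/-- For a pullback `P = Y ×_W Z` and a point `x : A ⟶ P` with projections
`x_Y := x ≫ p₁` and `x_Z := x ≫ p₂`, the self-pullback (stabilizer) `A ×_P A` of `x`
is isomorphic to the fibre product `(A ×_Y A) ×_{A × A} (A ×_Z A)` of the self-pullbacks
of `x_Y` and `x_Z` over `A × A`, where each self-pullback maps to `A × A` by the pairing
of its two projections; the isomorphism is compatible with the canonical morphisms of
both sides to `A × A`. -/
theorem stabilizer_of_pullback_point
    {C : Type u} [Category.{v} C] [HasFiniteLimits C]
    {Y W Z A : C} (f : Y ⟶ W) (g : Z ⟶ W)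
    (x : A ⟶ pullback f g) :
    ∃ e : pullback x x ≅
        pullback
          (prod.lift (pullback.fst (x ≫ pullback.fst f g) (x ≫ pullback.fst f g))
            (pullback.snd (x ≫ pullback.fst f g) (x ≫ pullback.fst f g)))
          (prod.lift (pullback.fst (x ≫ pullback.snd f g) (x ≫ pullback.snd f g))
            (pullback.snd (x ≫ pullback.snd f g) (x ≫ pullback.snd f g))),
      (e.hom ≫
          pullback.fst
            (prod.lift (pullback.fst (x ≫ pullback.fst f g) (x ≫ pullback.fst f g))
              (pullback.snd (x ≫ pullback.fst f g) (x ≫ pullback.fst f g)))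
            (prod.lift (pullback.fst (x ≫ pullback.snd f g) (x ≫ pullback.snd f g))
              (pullback.snd (x ≫ pullback.snd f g) (x ≫ pullback.snd f g))) ≫
          prod.lift (pullback.fst (x ≫ pullback.fst f g) (x ≫ pullback.fst f g))
            (pullback.snd (x ≫ pullback.fst f g) (x ≫ pullback.fst f g)) =
        prod.lift (pullback.fst x x) (pullback.snd x x)) ∧
      (e.hom ≫
          pullback.snd
            (prod.lift (pullback.fst (x ≫ pullback.fst f g) (x ≫ pullback.fst f g))
              (pullback.snd (x ≫ pullback.fst f g) (x ≫ pullback.fst f g)))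
            (prod.lift (pullback.fst (x ≫ pullback.snd f g) (x ≫ pullback.snd f g))
              (pullback.snd (x ≫ pullback.snd f g) (x ≫ pullback.snd f g))) ≫
          prod.lift (pullback.fst (x ≫ pullback.snd f g) (x ≫ pullback.snd f g))
            (pullback.snd (x ≫ pullback.snd f g) (x ≫ pullback.snd f g)) =
        prod.lift (pullback.fst x x) (pullback.snd x x)) := by
  set xY := x ≫ pullback.fst f g with hxY
  set xZ := x ≫ pullback.snd f g with hxZ
  set q₁ : pullback xY xY ⟶ A ⨯ A :=
    prod.lift (pullback.fst xY xY) (pullback.snd xY xY) with hq₁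
  set q₂ : pullback xZ xZ ⟶ A ⨯ A :=
    prod.lift (pullback.fst xZ xZ) (pullback.snd xZ xZ) with hq₂
  have condY : pullback.fst x x ≫ xY = pullback.snd x x ≫ xY := by
    rw [hxY, ← Category.assoc, ← Category.assoc, pullback.condition]
  have condZ : pullback.fst x x ≫ xZ = pullback.snd x x ≫ xZ := by
    rw [hxZ, ← Category.assoc, ← Category.assoc, pullback.condition]
  have hfst : pullback.fst q₁ q₂ ≫ pullback.fst xY xY
      = pullback.snd q₁ q₂ ≫ pullback.fst xZ xZ := by
    have := pullback.condition (f := q₁) (g := q₂)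
    have h := congrArg (· ≫ prod.fst) this
    simpa [hq₁, hq₂, prod.lift_fst, prod.lift_snd, prod.lift_fst_assoc, prod.lift_snd_assoc, pullback.lift_fst, pullback.lift_snd, pullback.lift_fst_assoc, pullback.lift_snd_assoc] using h
  have hsnd : pullback.fst q₁ q₂ ≫ pullback.snd xY xY
      = pullback.snd q₁ q₂ ≫ pullback.snd xZ xZ := by
    have := pullback.condition (f := q₁) (g := q₂)
    have h := congrArg (· ≫ prod.snd) this
    simpa [hq₁, hq₂, prod.lift_fst, prod.lift_snd, prod.lift_fst_assoc, prod.lift_snd_assoc, pullback.lift_fst, pullback.lift_snd, pullback.lift_fst_assoc, pullback.lift_snd_assoc] using h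
  have hinvcond : (pullback.fst q₁ q₂ ≫ pullback.fst xY xY) ≫ x
      = (pullback.fst q₁ q₂ ≫ pullback.snd xY xY) ≫ x := by
    apply pullback.hom_ext
    · simp only [Category.assoc, ← hxY]
      rw [pullback.condition]
    · simp only [Category.assoc, ← hxZ]
      rw [reassoc_of% hfst, reassoc_of% hsnd, pullback.condition]
  refine ⟨{
    hom := pullback.lift
      (pullback.lift (pullback.fst x x) (pullback.snd x x) condY)
      (pullback.lift (pullback.fst x x) (pullback.snd x x) condZ)
      (by apply Limits.prod.hom_ext <;> simp +zetaDelta [hq₁, hq₂, prod.lift_fst, prod.lift_snd, prod.lift_fst_assoc, prod.lift_snd_assoc, pullback.lift_fst, pullback.lift_snd, pullback.lift_fst_assoc, pullback.lift_snd_assoc])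
    inv := pullback.lift (pullback.fst q₁ q₂ ≫ pullback.fst xY xY)
      (pullback.fst q₁ q₂ ≫ pullback.snd xY xY) hinvcond
    hom_inv_id := by apply pullback.hom_ext <;> simp +zetaDelta [prod.lift_fst, prod.lift_snd, prod.lift_fst_assoc, prod.lift_snd_assoc, pullback.lift_fst, pullback.lift_snd, pullback.lift_fst_assoc, pullback.lift_snd_assoc]
    inv_hom_id := by
      apply pullback.hom_ext
      · apply pullback.hom_ext <;> simp +zetaDelta [prod.lift_fst, prod.lift_snd, prod.lift_fst_assoc, prod.lift_snd_assoc, pullback.lift_fst, pullback.lift_snd, pullback.lift_fst_assoc, pullback.lift_snd_assoc]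
      · apply pullback.hom_ext <;> simp +zetaDelta [← hfst, ← hsnd, prod.lift_fst, prod.lift_snd, prod.lift_fst_assoc, prod.lift_snd_assoc, pullback.lift_fst, pullback.lift_snd, pullback.lift_fst_assoc, pullback.lift_snd_assoc]
  }, ?_, ?_⟩
  · apply Limits.prod.hom_ext <;> simp +zetaDelta [hq₁, prod.lift_fst, prod.lift_snd, prod.lift_fst_assoc, prod.lift_snd_assoc, pullback.lift_fst, pullback.lift_snd, pullback.lift_fst_assoc, pullback.lift_snd_assoc]
  · apply Limits.prod.hom_ext <;> simp +zetaDelta [hq₂, prod.lift_fst, prod.lift_snd, prod.lift_fst_assoc, prod.lift_snd_assoc, pullback.lift_fst, pullback.lift_snd, pullback.lift_fst_assoc, pullback.lift_snd_assoc]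
end
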